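/- Let μ be a Borel probability measure with all moments finite and infinite support, and let (a_k, b_k) be the three-term recurrence coefficients of its orthonormal polynomials. If the support of μ is unbounded, then the Jacobi operator J with these coefficients is unbounded: there is no constant C such that ‖J v‖ ≤ C ‖v‖ for all finitely supported v ∈ ℓ²(ℤ≥0). -/

import Mathlib

open MeasureTheory Polynomial

noncomputable section

instance : Fact ((1 : ENNReal) ≤ 2) := ⟨one_le_two⟩

/-- The topological support of a Borel measure on `ℝ`. -/
def measSupport (μ : Measure ℝ) : Set ℝ := {x : ℝ | ∀ U ∈ nhds x, μ U ≠ 0}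

/-- The Hilbert space `ℓ²(ℤ≥0)`. -/
abbrev JacobiH : Type := lp (fun _ : ℕ => ℂ) 2

/-- The submodule of finitely supported elements of `ℓ²(ℤ≥0)`. -/
def finSupp : Submodule ℂ JacobiH where
  carrier := {f | (Function.support (f : ℕ → ℂ)).Finite}
  zero_mem' := by
    have : Function.support ((0 : JacobiH) : ℕ → ℂ) = ∅ := by
      exact Function.support_eq_empty_iff.mpr (lp.coeFn_zero _ _)
    show (Function.support ((0 : JacobiH) : ℕ → ℂ)).Finite
    rw [this]; exact Set.finite_empty
  add_mem' := by
    intro f g hf hg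
    refine (hf.union hg).subset fun x hx => ?_
    by_contra hc
    simp only [Set.mem_union, Function.mem_support, not_or, not_not] at hc
    exact hx (by simp only [Function.mem_support, not_not, lp.coeFn_add, Pi.add_apply,
      hc.1, hc.2, add_zero])
  smul_mem' := by
    intro c f hf
    refine hf.subset fun x hx => ?_
    by_contra hc
    simp only [Function.mem_support, not_not] at hc
    exact hx (by simp only [Function.mem_support, not_not, lp.coeFn_smul, Pi.smul_apply,
      hc, smul_zero])

/-- The formal Jacobi (tridiagonal) expression with coefficients `a`, `b`, using the
conventions `a_{-1} = 0`, `v_{-1} = 0`. -/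
def jacobiApply (a b : ℕ → ℝ) (v : ℕ → ℂ) : ℕ → ℂ
  | 0 => (a 0 : ℂ) * v 1 + (b 0 : ℂ) * v 0
  | (k + 1) => (a (k + 1) : ℂ) * v (k + 2) + (b (k + 1) : ℂ) * v (k + 1) + (a k : ℂ) * v k

section Aux

open Finset

lemma intPoly (μ : Measure ℝ) (hmom : ∀ m : ℕ, Integrable (fun x : ℝ => |x| ^ m) μ)
    (q : Polynomial ℝ) : Integrable (fun x => q.eval x) μ := by
  have h : (fun x => q.eval x) =
      fun x => ∑ i ∈ Finset.range (q.natDegree + 1), q.coeff i * x ^ i := by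
    funext x; exact q.eval_eq_sum_range x
  rw [h]
  apply integrable_finset_sum
  intro i _
  have : Integrable (fun x : ℝ => x ^ i) μ := by
    refine (hmom i).mono' ?_ ?_
    · exact (continuous_pow i).aestronglyMeasurable
    · filter_upwards with x
      simp [abs_pow]
  exact this.const_mul _

lemma intMulP (μ : Measure ℝ) (hmom : ∀ m : ℕ, Integrable (fun x : ℝ => |x| ^ m) μ)
    (m : ℕ) (q : Polynomial ℝ) : Integrable (fun x => x ^ m * q.eval x) μ := by
  have := intPoly μ hmom (X ^ m * q)
  simpa using this

lemma intMulExpand (μ : Measure ℝ) (hmom : ∀ m : ℕ, Integrable (fun x : ℝ => |x| ^ m) μ)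
    (p : ℕ → Polynomial ℝ) (m n : ℕ) (d : ℕ → ℝ) :
    ∫ x, x ^ m * (∑ j ∈ range (n + 1), C (d j) * p j).eval x ∂μ
      = ∑ j ∈ range (n + 1), d j * ∫ x, x ^ m * (p j).eval x ∂μ := by
  have h : (fun x => x ^ m * (∑ j ∈ range (n + 1), C (d j) * p j).eval x)
      = fun x => ∑ j ∈ range (n + 1), d j * (x ^ m * (p j).eval x) := by
    funext x
    rw [eval_finset_sum, Finset.mul_sum]
    apply Finset.sum_congr rfl
    intro j _
    simp; ring
  rw [h, integral_finset_sum]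
  · apply Finset.sum_congr rfl
    intro j _
    exact MeasureTheory.integral_const_mul _ _
  · intro j _
    exact (intMulP μ hmom m (p j)).const_mul _

lemma intExpandOrth (μ : Measure ℝ) (hmom : ∀ m : ℕ, Integrable (fun x : ℝ => |x| ^ m) μ)
    (p : ℕ → Polynomial ℝ)
    (horth : ∀ n m, ∫ x, (p n).eval x * (p m).eval x ∂μ = if n = m then 1 else 0)
    (n : ℕ) (d : ℕ → ℝ) (k : ℕ) :
    ∫ x, (∑ j ∈ range (n + 1), C (d j) * p j).eval x * (p k).eval x ∂μ
      = if k ∈ range (n + 1) then d k else 0 := by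
  have h : (fun x => (∑ j ∈ range (n + 1), C (d j) * p j).eval x * (p k).eval x)
      = fun x => ∑ j ∈ range (n + 1), d j * ((p j).eval x * (p k).eval x) := by
    funext x
    rw [eval_finset_sum, Finset.sum_mul]
    apply Finset.sum_congr rfl
    intro j _
    simp; ring
  rw [h, integral_finset_sum]
  · have : ∀ j ∈ range (n + 1), (∫ x, d j * ((p j).eval x * (p k).eval x) ∂μ)
        = if j = k then d j else 0 := by
      intro j _
      rw [MeasureTheory.integral_const_mul, horth j k]
      by_cases hjk : j = k <;> simp [hjk]
    rw [Finset.sum_congr rfl this, Finset.sum_ite_eq']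
  · intro j _
    have := (intPoly μ hmom (C (d j) * (p j * p k)))
    simpa [mul_assoc] using this

lemma spanP (p : ℕ → Polynomial ℝ) (hdeg : ∀ n, (p n).degree = n)
    (hlead : ∀ n, 0 < (p n).leadingCoeff) :
    ∀ n (q : Polynomial ℝ), q.natDegree ≤ n →
      ∃ d : ℕ → ℝ, q = ∑ j ∈ range (n + 1), C (d j) * p j := by
  intro n
  induction n with
  | zero =>
    intro q hq
    have hp0 : (p 0).degree = 0 := by simpa using hdeg 0
    have hp0C : p 0 = C ((p 0).coeff 0) := eq_C_of_degree_le_zero hp0.le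
    have hc0 : (p 0).coeff 0 ≠ 0 := by
      have := hlead 0
      rw [Polynomial.leadingCoeff, natDegree_eq_of_degree_eq_some hp0] at this
      exact this.ne'
    refine ⟨fun _ => q.coeff 0 / (p 0).coeff 0, ?_⟩
    have hqC : q = C (q.coeff 0) := eq_C_of_natDegree_le_zero hq
    rw [Finset.sum_range_one]
    calc q = C (q.coeff 0) := hqC
      _ = C (q.coeff 0 / (p 0).coeff 0) * C ((p 0).coeff 0) := by
          rw [← C_mul, div_mul_cancel₀ _ hc0]
      _ = C (q.coeff 0 / (p 0).coeff 0) * p 0 := by rw [← hp0C]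
  | succ n ih =>
    intro q hq
    set ℓ := (p (n+1)).leadingCoeff with hℓ
    have hℓ0 : ℓ ≠ 0 := (hlead (n+1)).ne'
    have hpdeg : (p (n+1)).natDegree = n + 1 := natDegree_eq_of_degree_eq_some (hdeg (n+1))
    set r := q - C (q.coeff (n+1) / ℓ) * p (n+1) with hr
    have hrd : r.natDegree ≤ n := by
      rw [natDegree_le_iff_coeff_eq_zero]
      intro N hN
      rcases eq_or_lt_of_le (Nat.succ_le_of_lt hN) with h | h
      · rw [hr]
        simp only [coeff_sub, coeff_C_mul]
        rw [← h]
        have : (p (n+1)).coeff (n+1) = ℓ := by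
          rw [hℓ, Polynomial.leadingCoeff, hpdeg]
        rw [this, div_mul_cancel₀ _ hℓ0, sub_self]
      · have h1 : q.coeff N = 0 := coeff_eq_zero_of_natDegree_lt (lt_of_le_of_lt hq h)
        have h2 : (p (n+1)).coeff N = 0 := coeff_eq_zero_of_natDegree_lt (by omega)
        rw [hr]; simp [h1, h2]
    obtain ⟨d, hd⟩ := ih r hrd
    refine ⟨fun j => if j = n + 1 then q.coeff (n+1) / ℓ else d j, ?_⟩
    rw [Finset.sum_range_succ]
    have h1 : ∑ j ∈ range (n+1), C (if j = n + 1 then q.coeff (n+1) / ℓ else d j) * p j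
        = ∑ j ∈ range (n+1), C (d j) * p j := by
      apply Finset.sum_congr rfl
      intro j hj
      rw [if_neg (by simp at hj; omega)]
    rw [h1, ← hd, hr]
    show q = _ + C (if n+1 = n+1 then q.coeff (n+1) / ℓ else d (n+1)) * p (n+1)
    rw [if_pos rfl]
    ring

lemma normSqEq (f : JacobiH) (N : ℕ) (h : ∀ k, N ≤ k → (f : ℕ → ℂ) k = 0) :
    ‖f‖ ^ 2 = ∑ k ∈ range N, ‖(f : ℕ → ℂ) k‖ ^ 2 := by
  have h2 : (0:ℝ) < (2 : ENNReal).toReal := by norm_num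
  have := lp.norm_rpow_eq_tsum h2 f
  have ht : (2 : ENNReal).toReal = ((2:ℕ):ℝ) := by norm_num
  rw [ht] at this
  simp only [Real.rpow_natCast] at this
  rw [this]
  apply tsum_eq_sum
  intro k hk
  rw [h k (by simpa using hk)]
  simp

lemma coeSumSingle (c : ℕ → ℂ) (N : ℕ) (k : ℕ) :
    ((∑ n ∈ range N, c n • lp.single 2 n (1:ℂ) : JacobiH) : ℕ → ℂ) k
      = if k ∈ range N then c k else 0 := by
  rw [lp.coeFn_sum]
  simp only [Finset.sum_apply, lp.coeFn_smul, Pi.smul_apply]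
  have : ∀ n ∈ range N, c n • ((lp.single 2 n (1:ℂ) : JacobiH) : ℕ → ℂ) k
      = if n = k then c n else 0 := by
    intro n _
    rw [lp.single_apply]
    by_cases h : k = n
    · subst h; simp
    · simp [h, Ne.symm h]
  rw [Finset.sum_congr rfl this, Finset.sum_ite_eq']

lemma intThree (μ : Measure ℝ) (hmom : ∀ m : ℕ, Integrable (fun x : ℝ => |x| ^ m) μ)
    (m : ℕ) (α β γ : ℝ) (q1 q2 q3 : Polynomial ℝ) :
    ∫ x, x ^ m * (α * q1.eval x + β * q2.eval x + γ * q3.eval x) ∂μ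
      = α * ∫ x, x ^ m * q1.eval x ∂μ + β * ∫ x, x ^ m * q2.eval x ∂μ
        + γ * ∫ x, x ^ m * q3.eval x ∂μ := by
  have key := intMulExpand μ hmom
    (fun i => if i = 0 then q1 else if i = 1 then q2 else q3) m 2
    (fun i => if i = 0 then α else if i = 1 then β else γ)
  norm_num [Finset.sum_range_succ, eval_add, eval_mul, eval_C] at key
  rw [key]

lemma intTwo (μ : Measure ℝ) (hmom : ∀ m : ℕ, Integrable (fun x : ℝ => |x| ^ m) μ)
    (m : ℕ) (α β : ℝ) (q1 q2 : Polynomial ℝ) :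
    ∫ x, x ^ m * (α * q1.eval x + β * q2.eval x) ∂μ
      = α * ∫ x, x ^ m * q1.eval x ∂μ + β * ∫ x, x ^ m * q2.eval x ∂μ := by
  have := intThree μ hmom m α β 0 q1 q2 0
  simpa using this

end Aux

/-- The coefficients of `x^m` against the orthonormal polynomials. -/
def cc (μ : Measure ℝ) (p : ℕ → Polynomial ℝ) (m n : ℕ) : ℝ :=
  ∫ x, x ^ m * (p n).eval x ∂μ

/-- The sum of squares of the coefficients of `x^m`. -/
def SS (μ : Measure ℝ) (p : ℕ → Polynomial ℝ) (m : ℕ) : ℝ :=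
  ∑ n ∈ Finset.range (m + 1), (cc μ p m n) ^ 2
/-- Let `μ` be a Borel probability measure with all moments finite and infinite support, and
let `(a_k, b_k)` be the three-term recurrence coefficients of its orthonormal polynomials.
If the support of `μ` is unbounded, then the Jacobi operator `J` with these coefficients is
unbounded: there is no constant `C` with `‖J v‖ ≤ C ‖v‖` for all finitely supported `v`. -/
theorem jacobi_unbounded_of_unbounded_support (μ : Measure ℝ) [IsProbabilityMeasure μ]
    (hmom : ∀ m : ℕ, Integrable (fun x : ℝ => |x| ^ m) μ)
    (hsupp : (measSupport μ).Infinite)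
    (hunb : ¬ Bornology.IsBounded (measSupport μ))
    (p : ℕ → Polynomial ℝ)
    (hdeg : ∀ n, (p n).degree = n)
    (hlead : ∀ n, 0 < (p n).leadingCoeff)
    (horth : ∀ n m, ∫ x, (p n).eval x * (p m).eval x ∂μ = if n = m then 1 else 0)
    (a b : ℕ → ℝ) (hapos : ∀ k, 0 < a k)
    (hrec : ∀ k : ℕ, X * p (k + 1) =
      C (a (k + 1)) * p (k + 2) + C (b (k + 1)) * p (k + 1) + C (a k) * p k)
    (hrec0 : X * p 0 = C (a 0) * p 1 + C (b 0) * p 0)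
    (J : JacobiH →ₗ.[ℂ] JacobiH) (hdom : J.domain = finSupp)
    (hact : ∀ (v : J.domain) (k : ℕ),
      (J v : ℕ → ℂ) k = jacobiApply a b ((v : JacobiH) : ℕ → ℂ) k) :
    ¬ ∃ C : ℝ, ∀ v : J.domain, ‖J v‖ ≤ C * ‖(v : JacobiH)‖ := by
  -- p 0 = 1
  have hp0 : p 0 = 1 := by
    have hd0 : (p 0).degree = 0 := by simpa using hdeg 0
    have hCp : p 0 = Polynomial.C ((p 0).coeff 0) := eq_C_of_degree_le_zero hd0.le
    have hpos : 0 < (p 0).coeff 0 := by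
      have := hlead 0
      rwa [Polynomial.leadingCoeff, natDegree_eq_of_degree_eq_some hd0] at this
    have h00 := horth 0 0
    rw [hCp] at h00
    simp only [eval_C, if_pos rfl] at h00
    rw [MeasureTheory.integral_const, probReal_univ] at h00
    simp only [ENNReal.toReal_one, smul_eq_mul, one_mul] at h00
    norm_num at h00
    have : (p 0).coeff 0 = 1 := by nlinarith
    rw [hCp, this, map_one]
  -- expansions of X^m
  choose d hd using fun m => spanP p hdeg hlead m ((X : Polynomial ℝ) ^ m)
    (by simp [natDegree_X_pow])
  -- coefficients
  have hcd : ∀ m k, cc μ p m k = if k ∈ Finset.range (m + 1) then d m k else 0 := by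
    intro m k
    have h := intExpandOrth μ hmom p horth m (d m) k
    rw [← hd m] at h
    have hfun : (fun x : ℝ => eval x ((X : Polynomial ℝ) ^ m) * eval x (p k))
        = fun x => x ^ m * eval x (p k) := by funext x; simp
    rw [hfun] at h
    exact h
  have hczero : ∀ m k, m < k → cc μ p m k = 0 := by
    intro m k hk
    rw [hcd m k, if_neg (by simp; omega)]
  -- moment identity
  have hmome : ∀ m, ∫ x, x ^ (2 * m) ∂μ = SS μ p m := by
    intro m
    have h := intMulExpand μ hmom p m m (d m)
    rw [← hd m] at h
    have hfun : (fun x : ℝ => x ^ m * eval x ((X : Polynomial ℝ) ^ m))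
        = fun x => x ^ (2 * m) := by
      funext x; simp [eval_pow]; rw [two_mul, pow_add]
    rw [hfun] at h
    rw [h]
    unfold SS
    apply Finset.sum_congr rfl
    intro j hj
    have e : (∫ x, x ^ m * eval x (p j) ∂μ) = cc μ p m j := rfl
    have e2 : cc μ p m j = d m j := by rw [hcd m j, if_pos hj]
    rw [e, e2, sq]
  -- recurrence for the coefficients
  have hrecc0 : ∀ m, cc μ p (m + 1) 0 = a 0 * cc μ p m 1 + b 0 * cc μ p m 0 := by
    intro m
    have hfun : (fun x : ℝ => x ^ (m + 1) * eval x (p 0))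
        = fun x => x ^ m * (a 0 * eval x (p 1) + b 0 * eval x (p 0)) := by
      funext x
      have h := congrArg (eval x) hrec0
      simp only [eval_mul, eval_add, eval_C, eval_X] at h
      rw [pow_succ, mul_assoc, h]
    show (∫ x, x ^ (m + 1) * eval x (p 0) ∂μ) = _
    rw [hfun, intTwo μ hmom m (a 0) (b 0) (p 1) (p 0)]
    rfl
  have hreccS : ∀ m k, cc μ p (m + 1) (k + 1) =
      a (k + 1) * cc μ p m (k + 2) + b (k + 1) * cc μ p m (k + 1) + a k * cc μ p m k := by
    intro m k
    have hfun : (fun x : ℝ => x ^ (m + 1) * eval x (p (k + 1)))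
        = fun x => x ^ m * (a (k + 1) * eval x (p (k + 2)) + b (k + 1) * eval x (p (k + 1))
            + a k * eval x (p k)) := by
      funext x
      have h := congrArg (eval x) (hrec k)
      simp only [eval_mul, eval_add, eval_C, eval_X] at h
      rw [pow_succ, mul_assoc, h]
    show (∫ x, x ^ (m + 1) * eval x (p (k + 1)) ∂μ) = _
    rw [hfun, intThree μ hmom m (a (k + 1)) (b (k + 1)) (a k) (p (k + 2)) (p (k + 1)) (p k)]
    rfl
  have hSS0 : SS μ p 0 = 1 := by
    have : cc μ p 0 0 = 1 := by
      show (∫ x, x ^ 0 * eval x (p 0) ∂μ) = 1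
      simp [hp0]
    unfold SS
    rw [Finset.sum_range_one, this, one_pow]
  rintro ⟨C0, hCb⟩
  set C' := max C0 1 with hC'def
  have hC'1 : (1 : ℝ) ≤ C' := le_max_right _ _
  have hC'pos : (0 : ℝ) < C' := lt_of_lt_of_le one_pos hC'1
  -- the key step: SS (m+1) ≤ C'^2 * SS m
  have hstep : ∀ m, SS μ p (m + 1) ≤ C' ^ 2 * SS μ p m := by
    intro m
    set vv : JacobiH :=
      ∑ n ∈ Finset.range (m + 1), ((cc μ p m n : ℝ) : ℂ) • lp.single 2 n (1 : ℂ) with hvv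
    have hv : ∀ k, (vv : ℕ → ℂ) k = ((cc μ p m k : ℝ) : ℂ) := by
      intro k
      rw [hvv, coeSumSingle]
      split_ifs with h
      · rfl
      · rw [hczero m k (by simp at h; omega)]; simp
    have hvmem : vv ∈ finSupp := by
      show (Function.support ((vv : JacobiH) : ℕ → ℂ)).Finite
      apply Set.Finite.subset (Finset.range (m + 1)).finite_toSet
      intro k hk
      simp only [Function.mem_support] at hk
      by_contra hnk
      apply hk
      rw [hv k, hczero m k (by simp at hnk; omega)]
      simp
    set w : J.domain := ⟨vv, hdom.symm ▸ hvmem⟩ with hw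
    have hv' : ∀ k, (((w : JacobiH)) : ℕ → ℂ) k = ((cc μ p m k : ℝ) : ℂ) := hv
    have hJw : ∀ k, ((J w : JacobiH) : ℕ → ℂ) k = ((cc μ p (m + 1) k : ℝ) : ℂ) := by
      intro k
      rw [hact w k]
      cases k with
      | zero =>
        simp only [jacobiApply, hv', hv]
        rw [hrecc0 m]; push_cast; ring
      | succ k =>
        simp only [jacobiApply, hv', hv]
        rw [hreccS m k]; push_cast; ring
    have hnv : ‖vv‖ ^ 2 = SS μ p m := by
      rw [normSqEq vv (m + 1) (fun k hk => by rw [hv k, hczero m k (by omega)]; simp)]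
      unfold SS
      apply Finset.sum_congr rfl
      intro n _
      rw [hv n, Complex.norm_real, Real.norm_eq_abs, sq_abs]
    have hnJ : ‖J w‖ ^ 2 = SS μ p (m + 1) := by
      rw [normSqEq (J w) (m + 2) (fun k hk => by
        rw [hJw k, hczero (m + 1) k (by omega)]; simp)]
      unfold SS
      apply Finset.sum_congr rfl
      intro n _
      rw [hJw n, Complex.norm_real, Real.norm_eq_abs, sq_abs]
    have hb : ‖J w‖ ≤ C' * ‖vv‖ := by
      refine le_trans (hCb w) ?_
      exact mul_le_mul_of_nonneg_right (le_max_left _ _) (norm_nonneg _)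
    calc SS μ p (m + 1) = ‖J w‖ ^ 2 := hnJ.symm
      _ ≤ (C' * ‖vv‖) ^ 2 := pow_le_pow_left₀ (norm_nonneg _) hb 2
      _ = C' ^ 2 * ‖vv‖ ^ 2 := by ring
      _ = C' ^ 2 * SS μ p m := by rw [hnv]
  have hSSle : ∀ m, SS μ p m ≤ (C' ^ 2) ^ m := by
    intro m
    induction m with
    | zero => simp [hSS0]
    | succ n ih =>
      calc SS μ p (n + 1) ≤ C' ^ 2 * SS μ p n := hstep n
        _ ≤ C' ^ 2 * (C' ^ 2) ^ n := by
            exact mul_le_mul_of_nonneg_left ih (sq_nonneg _)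
        _ = (C' ^ 2) ^ (n + 1) := by rw [pow_succ]; ring
  -- find a point of the support far away
  rw [isBounded_iff_forall_norm_le] at hunb
  push_neg at hunb
  obtain ⟨y, hyS, hy⟩ := hunb (2 * C' + 1)
  have hy' : 2 * C' + 1 < |y| := by rwa [Real.norm_eq_abs] at hy
  have hU : μ (Metric.ball y 1) ≠ 0 := hyS _ (Metric.ball_mem_nhds y one_pos)
  set t := (μ (Metric.ball y 1)).toReal with htdef
  have ht : 0 < t := ENNReal.toReal_pos hU (measure_ne_top μ _)
  have hintg : ∀ m : ℕ, Integrable (fun x : ℝ => x ^ (2 * m)) μ := by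
    intro m
    have := intPoly μ hmom ((X : Polynomial ℝ) ^ (2 * m))
    simpa using this
  have hlow : ∀ m, ((2 * C') ^ 2) ^ m * t ≤ ∫ x, x ^ (2 * m) ∂μ := by
    intro m
    have h1 : ((2 * C') ^ 2) ^ m * t ≤ ∫ x in Metric.ball y 1, x ^ (2 * m) ∂μ := by
      apply setIntegral_ge_of_const_le_real measurableSet_ball (measure_ne_top μ _)
      · intro x hx
        have hxd : |x - y| < 1 := by rwa [Metric.mem_ball, Real.dist_eq] at hx
        have hxa : 2 * C' ≤ |x| := by
          have h2 := abs_sub_abs_le_abs_sub y x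
          rw [abs_sub_comm y x] at h2
          linarith
        have hsq : (2 * C') ^ 2 ≤ x ^ 2 := by
          have h2 : (2 * C') ^ 2 ≤ |x| ^ 2 := pow_le_pow_left₀ (by positivity) hxa 2
          rwa [sq_abs] at h2
        calc ((2 * C') ^ 2) ^ m ≤ (x ^ 2) ^ m := pow_le_pow_left₀ (by positivity) hsq m
          _ = x ^ (2 * m) := (pow_mul x 2 m).symm
      · exact (hintg m).integrableOn
    refine le_trans h1 (setIntegral_le_integral (hintg m) (ae_of_all _ fun x => ?_))
    show (0:ℝ) ≤ x ^ (2 * m)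
    rw [pow_mul]
    positivity
  obtain ⟨m, hm⟩ := pow_unbounded_of_one_lt (1 / t) (show (1 : ℝ) < 4 by norm_num)
  have hfin : ((2 * C') ^ 2) ^ m * t ≤ (C' ^ 2) ^ m := by
    refine le_trans (hlow m) ?_
    rw [hmome m]
    exact hSSle m
  have h4 : ((2 * C') ^ 2) ^ m = 4 ^ m * (C' ^ 2) ^ m := by
    have : (2 * C') ^ 2 = 4 * C' ^ 2 := by ring
    rw [this, mul_pow]
  have hppos : (0 : ℝ) < (C' ^ 2) ^ m := by positivity
  have h5 : 4 ^ m * t ≤ 1 := by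
    have h6 : 4 ^ m * t * (C' ^ 2) ^ m ≤ 1 * (C' ^ 2) ^ m := by
      rw [one_mul]
      calc (4:ℝ) ^ m * t * (C' ^ 2) ^ m = ((2 * C') ^ 2) ^ m * t := by rw [h4]; ring
        _ ≤ (C' ^ 2) ^ m := hfin
    exact le_of_mul_le_mul_right h6 hppos
  have h7 : (1 : ℝ) < 4 ^ m * t := by
    rw [div_lt_iff₀ ht] at hm
    linarith
  linarith
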